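/- Let α > 0 and let X be a non-negative absolutely continuous random variable with cumulative distribution function F, differentiable on (0, +∞) with derivative f, satisfying 0 < F(x) < 1 for all x > 0, lim_{x→0⁺} F(x) = 0 and lim_{x→+∞} F(x) = 1. Then for every a > 0 the α-generalized reversed aging intensity L̆_α of X satisfies: (1) 0 ≤ L̆_α(x) < +∞ for all x > 0; (2) lim_{x→0⁺} ∫_x^a L̆_α(t)/t dt < +∞; (3) lim_{x→+∞} ∫_a^x L̆_α(t)/t dt = +∞. -/

import Mathlib

/-- The α-generalized reversed aging intensity function. -/
noncomputable def genRAI (F f : ℝ → ℝ) (α x : ℝ) : ℝ :=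
  if α = 0 then -(x * f x) / (F x * Real.log (F x))
  else α * x * F x ^ (α - 1) * f x / (1 - F x ^ α)

/-- For `α > 0`, the α-generalized reversed aging intensity `L̆_α` of a non-negative
absolutely continuous random variable satisfies: (1) `0 ≤ L̆_α(x) < ∞` for all `x > 0`;
(2) `∫_x^a L̆_α(t)/t dt` converges to a finite limit as `x → 0⁺`;
(3) `∫_a^x L̆_α(t)/t dt → +∞` as `x → +∞`. -/
theorem stmt_9 (α : ℝ) (hα : 0 < α) (F f : ℝ → ℝ)
    (hmono : Monotone F)
    (hd : ∀ x ∈ Set.Ioi (0:ℝ), HasDerivAt F (f x) x)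
    (hF : ∀ x ∈ Set.Ioi (0:ℝ), 0 < F x ∧ F x < 1)
    (hfi : ∀ u v : ℝ, 0 < u → 0 < v → IntervalIntegrable f MeasureTheory.volume u v)
    (hF0 : Filter.Tendsto F (nhdsWithin (0:ℝ) (Set.Ioi 0)) (nhds 0))
    (hF1 : Filter.Tendsto F Filter.atTop (nhds 1))
    (a : ℝ) (ha : 0 < a) :
    (∀ x > (0:ℝ), 0 ≤ genRAI F f α x) ∧
    (∃ c : ℝ, Filter.Tendsto (fun x => ∫ t in x..a, genRAI F f α t / t)
      (nhdsWithin (0:ℝ) (Set.Ioi 0)) (nhds c)) ∧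
    Filter.Tendsto (fun x => ∫ t in a..x, genRAI F f α t / t)
      Filter.atTop Filter.atTop := by
  have hαne : α ≠ 0 := hα.ne'
  -- f is nonnegative on (0,∞)
  have hf_nonneg : ∀ x ∈ Set.Ioi (0:ℝ), 0 ≤ f x := by
    intro x hx
    have h := hd x hx
    rw [hasDerivAt_iff_tendsto_slope] at h
    have hsub : Set.Ioi x ⊆ {x}ᶜ := fun y hy => ne_of_gt hy
    have h' : Filter.Tendsto (slope F x) (nhdsWithin x (Set.Ioi x)) (nhds (f x)) :=
      h.mono_left (nhdsWithin_mono x hsub)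
    refine ge_of_tendsto h' ?_
    filter_upwards [self_mem_nhdsWithin] with y hy
    have hyx : (0:ℝ) < y - x := sub_pos.2 hy
    rw [slope_def_field]
    exact div_nonneg (sub_nonneg.2 (hmono hy.le)) hyx.le
  -- denominator positivity
  have hden : ∀ x ∈ Set.Ioi (0:ℝ), 0 < 1 - F x ^ α := by
    intro x hx
    obtain ⟨h0, h1⟩ := hF x hx
    have : F x ^ α < 1 := Real.rpow_lt_one h0.le h1 hα
    linarith
  -- the auxiliary function g
  set g : ℝ → ℝ := fun t => f t * (α * F t ^ (α - 1) / (1 - F t ^ α)) with hg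
  have hBeq : ∀ t ∈ Set.Ioi (0:ℝ), genRAI F f α t / t = g t := by
    intro t ht
    have htne : (t:ℝ) ≠ 0 := ne_of_gt ht
    have hdt := (hden t ht).ne'
    simp only [genRAI, if_neg hαne, hg]
    field_simp
  -- antiderivative
  set G : ℝ → ℝ := fun x => -Real.log (1 - F x ^ α) with hG
  have hAderiv : ∀ x ∈ Set.Ioi (0:ℝ), HasDerivAt G (g x) x := by
    intro x hx
    obtain ⟨h0, h1⟩ := hF x hx
    have h1' := (hd x hx).rpow_const (p := α) (Or.inl h0.ne')
    have h2 : HasDerivAt (fun y => 1 - F y ^ α) (-(f x * α * F x ^ (α - 1))) x :=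
      h1'.const_sub 1
    have h3 := h2.log (hden x hx).ne'
    have h4 := h3.neg
    refine h4.congr_deriv ?_
    have hdt := (hden x hx).ne'
    simp only [hg]
    field_simp
  -- continuity of F on positive points
  have hFc : ∀ x ∈ Set.Ioi (0:ℝ), ContinuousAt F x := fun x hx => (hd x hx).continuousAt
  -- integrability of g on positive intervals
  have hgi : ∀ u v : ℝ, 0 < u → 0 < v → IntervalIntegrable g MeasureTheory.volume u v := by
    intro u v hu hv
    have hsub : Set.uIcc u v ⊆ Set.Ioi (0:ℝ) := by
      intro t ht
      rw [Set.mem_uIcc] at ht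
      rcases ht with ⟨h1, _⟩ | ⟨h1, _⟩ <;> [exact lt_of_lt_of_le hu h1;
        exact lt_of_lt_of_le hv h1]
    refine (hfi u v hu hv).mul_continuousOn ?_
    intro t ht
    have ht' := hsub ht
    obtain ⟨h0, h1⟩ := hF t ht'
    have hc1 : ContinuousAt (fun y => F y ^ (α - 1)) t :=
      (hFc t ht').rpow_const (Or.inl h0.ne')
    have hc2 : ContinuousAt (fun y => F y ^ α) t :=
      (hFc t ht').rpow_const (Or.inl h0.ne')
    exact (((continuousAt_const.mul hc1).div (continuousAt_const.sub hc2)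
      (hden t ht').ne')).continuousWithinAt
  -- FTC
  have hFTC : ∀ u v : ℝ, 0 < u → 0 < v → (∫ t in u..v, genRAI F f α t / t) = G v - G u := by
    intro u v hu hv
    have hsub : Set.uIcc u v ⊆ Set.Ioi (0:ℝ) := by
      intro t ht
      rw [Set.mem_uIcc] at ht
      rcases ht with ⟨h1, _⟩ | ⟨h1, _⟩ <;> [exact lt_of_lt_of_le hu h1;
        exact lt_of_lt_of_le hv h1]
    have hcongr : (∫ t in u..v, genRAI F f α t / t) = ∫ t in u..v, g t :=
      intervalIntegral.integral_congr (fun t ht => hBeq t (hsub ht))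
    rw [hcongr]
    exact intervalIntegral.integral_eq_sub_of_hasDerivAt (fun t ht => hAderiv t (hsub ht))
      (hgi u v hu hv)
  refine ⟨?_, ?_, ?_⟩
  · -- nonnegativity
    intro x hx
    obtain ⟨h0, h1⟩ := hF x hx
    simp only [genRAI, if_neg hαne]
    apply div_nonneg _ (hden x hx).le
    have := hf_nonneg x hx
    have h2 : (0:ℝ) ≤ F x ^ (α - 1) := Real.rpow_nonneg h0.le _
    positivity
  · -- limit at 0⁺
    refine ⟨G a, ?_⟩
    have hGx : Filter.Tendsto G (nhdsWithin (0:ℝ) (Set.Ioi 0)) (nhds 0) := by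
      have hc1 : ContinuousAt (fun y : ℝ => y ^ α) 0 :=
        Real.continuousAt_rpow_const 0 α (Or.inr hα.le)
      have hc2 : ContinuousAt (fun y : ℝ => -Real.log (1 - y ^ α)) 0 := by
        refine ((Real.continuousAt_log ?_).comp (continuousAt_const.sub hc1)).neg
        simp [Real.zero_rpow hαne]
      have := hc2.tendsto.comp hF0
      simpa [Real.zero_rpow hαne, hG, Function.comp_def] using this
    have hlim : Filter.Tendsto (fun x => G a - G x) (nhdsWithin (0:ℝ) (Set.Ioi 0))
        (nhds (G a)) := by
      have := (tendsto_const_nhds (x := G a)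
        (f := nhdsWithin (0:ℝ) (Set.Ioi 0))).sub hGx
      simpa using this
    refine hlim.congr' ?_
    filter_upwards [self_mem_nhdsWithin] with x hx
    exact (hFTC x a hx ha).symm
  · -- limit at +∞
    have htd : Filter.Tendsto (fun x => 1 - F x ^ α) Filter.atTop
        (nhdsWithin (0:ℝ) (Set.Ioi 0)) := by
      apply tendsto_nhdsWithin_of_tendsto_nhds_of_eventually_within
      · have hc1 : ContinuousAt (fun y : ℝ => 1 - y ^ α) 1 :=
          continuousAt_const.sub (Real.continuousAt_rpow_const 1 α (Or.inl one_ne_zero))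
        have := hc1.tendsto.comp hF1
        simpa [Real.one_rpow, Function.comp_def] using this
      · filter_upwards [Filter.eventually_gt_atTop (0:ℝ)] with x hx
        exact hden x hx
    have hlog : Filter.Tendsto (fun x => Real.log (1 - F x ^ α)) Filter.atTop Filter.atBot := by
      have h1 : Filter.Tendsto Real.log (nhdsWithin (0:ℝ) (Set.Ioi 0)) Filter.atBot :=
        Real.tendsto_log_nhdsNE_zero.mono_left
          (nhdsWithin_mono 0 fun y hy => ne_of_gt hy)
      exact h1.comp htd
    have hGtop : Filter.Tendsto G Filter.atTop Filter.atTop := by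
      exact Filter.tendsto_neg_atBot_atTop.comp hlog
    have hlim : Filter.Tendsto (fun x => G x - G a) Filter.atTop Filter.atTop := by
      simpa [sub_eq_add_neg] using Filter.tendsto_atTop_add_const_right Filter.atTop (-(G a)) hGtop
    refine hlim.congr' ?_
    filter_upwards [Filter.eventually_gt_atTop (0:ℝ)] with x hx
    exact (hFTC a x ha hx).symm
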